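/- Let (x_n) be a summable sequence of positive real numbers such that the achievement set E = E(x_n) contains a nondegenerate open interval. Then a subset of E is meager in the subspace E if and only if it is meager in ℝ. -/

import Mathlib

set_option maxHeartbeats 1000000

open Set Topology

noncomputable section

/-- The achievement set (set of subsums) of a series `∑ xₙ`. -/
def achSet (x : ℕ → ℝ) : Set ℝ := {t : ℝ | ∃ A : Set ℕ, t = ∑' n : A, x n}

open Classical in
def Phi (x : ℕ → ℝ) (N : ℕ) (f : ℕ → Bool) : ℝ :=
  ∑' n, if N ≤ n ∧ f n = true then x n else 0

open Classical in
lemma summable_phi (x : ℕ → ℝ) (hpos : ∀ n, 0 < x n) (hsum : Summable x) (N : ℕ) (f : ℕ → Bool) :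
    Summable (fun n => if N ≤ n ∧ f n = true then x n else 0) := by
  refine Summable.of_nonneg_of_le (fun n => ?_) (fun n => ?_) hsum <;>
    · split <;> simp [(hpos _).le]

open Classical in
lemma phi_split (x : ℕ → ℝ) (hpos : ∀ n, 0 < x n) (hsum : Summable x) (N : ℕ) (f : ℕ → Bool) :
    Phi x 0 f = (∑ n ∈ Finset.range N, if f n = true then x n else 0) + Phi x N f := by
  classical
  have hg : Summable (fun n => if f n = true then x n else 0) := by
    have := summable_phi x hpos hsum 0 f
    simpa using this
  have h1 : Phi x 0 f = ∑' n, if f n = true then x n else 0 := by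
    unfold Phi; exact tsum_congr fun n => by simp
  have h2 := Summable.sum_add_tsum_nat_add (f := fun n => if f n = true then x n else 0) N hg
  have h3 : Phi x N f = ∑' n, if f (n + N) = true then x (n + N) else 0 := by
    have hh : Summable (fun n => if N ≤ n ∧ f n = true then x n else 0) :=
      summable_phi x hpos hsum N f
    have h4 := Summable.sum_add_tsum_nat_add (f := fun n => if N ≤ n ∧ f n = true then x n else 0) N hh
    have h5 : (∑ n ∈ Finset.range N, if N ≤ n ∧ f n = true then x n else 0) = 0 :=
      Finset.sum_eq_zero fun n hn => by
        simp [Nat.not_le.2 (Finset.mem_range.1 hn)]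
    unfold Phi
    rw [← h4, h5, zero_add]
    exact tsum_congr fun n => by simp [Nat.le_add_left]
  rw [h1, ← h2, h3]

lemma phi_nonneg (x : ℕ → ℝ) (hpos : ∀ n, 0 < x n) (N : ℕ) (f : ℕ → Bool) :
    0 ≤ Phi x N f :=
  tsum_nonneg fun n => by split <;> simp [(hpos _).le]

open Classical in
lemma phi_le_tail (x : ℕ → ℝ) (hpos : ∀ n, 0 < x n) (hsum : Summable x) (N : ℕ) (f : ℕ → Bool) :
    Phi x N f ≤ ∑' n, x (n + N) := by
  classical
  have hh : Summable (fun n => if N ≤ n ∧ f n = true then x n else 0) :=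
    summable_phi x hpos hsum N f
  have h4 := Summable.sum_add_tsum_nat_add (f := fun n => if N ≤ n ∧ f n = true then x n else 0) N hh
  have h5 : (∑ n ∈ Finset.range N, if N ≤ n ∧ f n = true then x n else 0) = 0 :=
    Finset.sum_eq_zero fun n hn => by simp [Nat.not_le.2 (Finset.mem_range.1 hn)]
  have heq : Phi x N f = ∑' n, if N ≤ n + N ∧ f (n + N) = true then x (n + N) else 0 := by
    unfold Phi; rw [← h4, h5, zero_add]
  rw [heq]
  refine Summable.tsum_le_tsum (fun n => ?_) ((summable_nat_add_iff N).2 hh) ((summable_nat_add_iff N).2 hsum)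
  split <;> simp [(hpos _).le]

open Classical in
lemma sum_add_mem (x : ℕ → ℝ) (hpos : ∀ n, 0 < x n) (hsum : Summable x) (N : ℕ)
    (s : Finset ℕ) (hs : s ⊆ Finset.range N) (u : ℝ) (hu : u ∈ Set.range (Phi x N)) :
    (∑ n ∈ s, x n) + u ∈ Set.range (Phi x 0) := by
  classical
  obtain ⟨f, rfl⟩ := hu
  refine ⟨fun n => decide (n ∈ s) || (decide (N ≤ n) && f n), ?_⟩
  have split := phi_split x hpos hsum N (fun n => decide (n ∈ s) || (decide (N ≤ n) && f n))
  rw [split]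
  congr 1
  · have hcong : ∀ n ∈ Finset.range N,
        (if (decide (n ∈ s) || (decide (N ≤ n) && f n)) = true then x n else 0)
          = if n ∈ s then x n else 0 := by
      intro n hn
      have hN : ¬ N ≤ n := Nat.not_le.2 (Finset.mem_range.1 hn)
      by_cases hmem : n ∈ s <;> simp [hmem, hN]
    rw [Finset.sum_congr rfl hcong, Finset.sum_ite_mem, Finset.inter_eq_right.2 hs]
  · unfold Phi
    refine tsum_congr fun n => ?_
    by_cases hN : N ≤ n
    · have hns : n ∉ s := fun h => by have := Finset.mem_range.1 (hs h); omega
      simp [hN, hns]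
    · simp [hN]

open Classical in
lemma decomp (x : ℕ → ℝ) (hpos : ∀ n, 0 < x n) (hsum : Summable x) (N : ℕ)
    (t : ℝ) (ht : t ∈ Set.range (Phi x 0)) :
    ∃ s ∈ (Finset.range N).powerset, ∃ u ∈ Set.range (Phi x N), t = (∑ n ∈ s, x n) + u := by
  classical
  obtain ⟨f, rfl⟩ := ht
  refine ⟨(Finset.range N).filter (fun n => f n = true),
    Finset.mem_powerset.2 (Finset.filter_subset _ _), Phi x N f, ⟨f, rfl⟩, ?_⟩
  rw [phi_split x hpos hsum N f]
  congr 1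
  exact (Finset.sum_filter _ _).symm

lemma continuous_phi (x : ℕ → ℝ) (hpos : ∀ n, 0 < x n) (hsum : Summable x) (N : ℕ) :
    Continuous (Phi x N) := by
  classical
  apply continuous_tsum (fun n => ?_) hsum (fun f n => ?_)
  · exact (continuous_of_discreteTopology
      (f := fun b : Bool => if N ≤ n ∧ b = true then x n else 0)).comp (continuous_apply n)
  · rw [Real.norm_eq_abs]
    split
    · rw [abs_of_nonneg (hpos _).le]
    · rw [abs_zero]; exact (hpos _).le

open Classical in
lemma achSet_eq_range (x : ℕ → ℝ) : achSet x = Set.range (Phi x 0) := by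
  classical
  ext t
  constructor
  · rintro ⟨A, rfl⟩
    refine ⟨fun n => decide (n ∈ A), ?_⟩
    unfold Phi
    rw [tsum_subtype]
    exact tsum_congr fun n => by
      by_cases h : n ∈ A <;> simp [Set.indicator, h]
  · rintro ⟨f, rfl⟩
    refine ⟨{n | f n = true}, ?_⟩
    rw [tsum_subtype]
    unfold Phi
    exact tsum_congr fun n => by
      by_cases h : f n = true <;> simp [Set.indicator, h]

lemma interior_union_eq_empty {X : Type*} [TopologicalSpace X] {A B : Set X}
    (hA : IsClosed A) (hiA : interior A = ∅) (hiB : interior B = ∅) :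
    interior (A ∪ B) = ∅ := by
  have h1 : interior (A ∪ B) \ A ⊆ interior B := by
    apply interior_maximal
    · intro p hp
      rcases interior_subset hp.1 with h | h
      · exact absurd h hp.2
      · exact h
    · exact isOpen_interior.sdiff hA
  rw [hiB, Set.subset_empty_iff, Set.diff_eq_empty] at h1
  have h2 := interior_maximal h1 isOpen_interior
  rw [hiA, Set.subset_empty_iff] at h2
  exact h2

lemma exists_nonempty_interior {X ι : Type*} [TopologicalSpace X] (s : Finset ι) (F : ι → Set X)
    (hF : ∀ i ∈ s, IsClosed (F i)) (U : Set X) (hU : IsOpen U) (hne : U.Nonempty)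
    (hsub : U ⊆ ⋃ i ∈ s, F i) : ∃ i ∈ s, (interior (F i)).Nonempty := by
  classical
  by_contra hcon
  simp only [not_exists, not_and, Set.not_nonempty_iff_eq_empty] at hcon
  have hcon' : ∀ i ∈ s, interior (F i) = ∅ := fun i hi => hcon i hi
  have key : ∀ (t : Finset ι), (∀ i ∈ t, IsClosed (F i)) → (∀ i ∈ t, interior (F i) = ∅) →
      interior (⋃ i ∈ t, F i) = ∅ := by
    intro t
    induction t using Finset.induction_on with
    | empty => intro _ _; simp
    | insert _ _ hnotmem ih =>
      intro hcl hint
      rw [Finset.set_biUnion_insert]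
      exact interior_union_eq_empty (hcl _ (Finset.mem_insert_self _ _))
        (hint _ (Finset.mem_insert_self _ _))
        (ih (fun i hi => hcl i (Finset.mem_insert_of_mem hi))
          (fun i hi => hint i (Finset.mem_insert_of_mem hi)))
  have := interior_maximal hsub hU
  rw [key s hF hcon', Set.subset_empty_iff] at this
  exact hne.ne_empty this

/-- closure in a closed subspace: nowhere dense upstairs from nowhere dense in subspace -/
lemma nwd_image_of_nwd_subspace {E : Set ℝ} (hE : IsClosed E)
    (hreg : E ⊆ closure (interior E)) -- unused here
    (s : Set E) (hs : IsNowhereDense s) :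
    IsNowhereDense ((↑) '' s : Set ℝ) := by
  by_contra hcon
  rw [IsNowhereDense, ← Set.not_nonempty_iff_eq_empty, not_not] at hcon
  obtain ⟨w, hw⟩ := hcon
  have himg : ((↑) '' s : Set ℝ) ⊆ E := by rintro _ ⟨p, _, rfl⟩; exact p.2
  have hclE : closure ((↑) '' s : Set ℝ) ⊆ E := hE.closure_subset_iff.2 himg
  have hwE : w ∈ E := hclE (interior_subset hw)
  set q : E := ⟨w, hwE⟩
  have hq : q ∈ interior (closure s) := by
    rw [IsEmbedding.subtypeVal.closure_eq_preimage_closure_image]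
    rw [mem_interior]
    refine ⟨(↑) ⁻¹' interior (closure ((↑) '' s : Set ℝ)), ?_, ?_, ?_⟩
    · exact Set.preimage_mono interior_subset
    · exact isOpen_interior.preimage continuous_subtype_val
    · exact hw
  rw [hs] at hq
  exact hq

lemma nwd_preimage_of_closed_nwd {E : Set ℝ}
    (hreg : E ⊆ closure (interior E))
    (C : Set ℝ) (hC : IsClosed C) (hiC : interior C = ∅) :
    IsNowhereDense {p : E | (p : ℝ) ∈ C} := by
  have hcl : IsClosed {p : E | (p : ℝ) ∈ C} := hC.preimage continuous_subtype_val
  rw [hcl.isNowhereDense_iff, ← Set.not_nonempty_iff_eq_empty]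
  rintro ⟨q, hq⟩
  rw [mem_interior_iff_mem_nhds, nhds_induced, Filter.mem_comap] at hq
  obtain ⟨V, hV, hVsub⟩ := hq
  rw [mem_nhds_iff] at hV
  obtain ⟨V', hV'sub, hV'open, hqV'⟩ := hV
  have hq2 : (q : ℝ) ∈ closure (interior E) := hreg q.2
  rw [mem_closure_iff_nhds] at hq2
  obtain ⟨w, hwV', hwint⟩ := hq2 V' (hV'open.mem_nhds hqV')
  have hW : V' ∩ interior E ⊆ C := by
    rintro p ⟨hp1, hp2⟩
    have : (⟨p, interior_subset hp2⟩ : E) ∈ ((↑) : E → ℝ) ⁻¹' V := hV'sub hp1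
    exact hVsub this
  have : w ∈ interior C :=
    interior_maximal hW (hV'open.inter isOpen_interior) ⟨hwV', hwint⟩
  rw [hiC] at this
  exact this

lemma achSet_regular (x : ℕ → ℝ) (hpos : ∀ n, 0 < x n) (hsum : Summable x)
    (hint : ∃ a b : ℝ, a < b ∧ Set.Ioo a b ⊆ achSet x) :
    achSet x ⊆ closure (interior (achSet x)) := by
  classical
  obtain ⟨a, b, hab, hIoo⟩ := hint
  intro t ht
  rw [Metric.mem_closure_iff]
  intro ε hε
  -- choose N with tail < ε
  obtain ⟨N, hN⟩ : ∃ N, ∑' n, x (n + N) < ε := by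
    have := tendsto_sum_nat_add x
    rw [Metric.tendsto_atTop] at this
    obtain ⟨N, hN⟩ := this ε hε
    refine ⟨N, ?_⟩
    have := hN N le_rfl
    rw [Real.dist_eq, sub_zero] at this
    calc ∑' n, x (n + N) ≤ |∑' n, x (n + N)| := le_abs_self _
    _ < ε := this
  set K : Set ℝ := Set.range (Phi x N) with hK
  have hKcomp : IsCompact K := isCompact_range (continuous_phi x hpos hsum N)
  -- covering of the interval
  set F : Finset ℕ → Set ℝ := fun s => (fun r => (∑ n ∈ s, x n) + r) '' K with hF
  have hFclosed : ∀ s : Finset ℕ, IsClosed (F s) := fun s =>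
    ((hKcomp.image (continuous_const.add continuous_id)).isClosed)
  have hcover : Set.Ioo a b ⊆ ⋃ s ∈ (Finset.range N).powerset, F s := by
    intro p hp
    have hpE : p ∈ Set.range (Phi x 0) := by rw [← achSet_eq_range]; exact hIoo hp
    obtain ⟨s, hs, u, hu, rfl⟩ := decomp x hpos hsum N p hpE
    exact Set.mem_biUnion hs ⟨u, hu, rfl⟩
  obtain ⟨s₀, hs₀, p₀, hp₀⟩ := exists_nonempty_interior _ F (fun s _ => hFclosed s)
    (Set.Ioo a b) isOpen_Ioo (Set.nonempty_Ioo.2 hab) hcover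
  -- get interior point of K
  have hqint : ∃ q ∈ interior K, True := by
    have himg := (Homeomorph.addLeft ((∑ n ∈ s₀, x n) : ℝ)).image_interior K
    have : F s₀ = (Homeomorph.addLeft ((∑ n ∈ s₀, x n) : ℝ)) '' K := rfl
    rw [this, ← himg] at hp₀
    obtain ⟨q, hq, _⟩ := hp₀
    exact ⟨q, hq, trivial⟩
  obtain ⟨q, hq, -⟩ := hqint
  -- decompose t
  have htE : t ∈ Set.range (Phi x 0) := by rw [← achSet_eq_range]; exact ht
  obtain ⟨s₁, hs₁, u, hu, rfl⟩ := decomp x hpos hsum N t htE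
  refine ⟨(∑ n ∈ s₁, x n) + q, ?_, ?_⟩
  · -- membership in interior achSet
    have h1 : (∑ n ∈ s₁, x n) + q ∈ (fun r => (∑ n ∈ s₁, x n) + r) '' interior K :=
      ⟨q, hq, rfl⟩
    have himg := (Homeomorph.addLeft ((∑ n ∈ s₁, x n) : ℝ)).image_interior K
    have h2 : (∑ n ∈ s₁, x n) + q ∈ interior (F s₁) := by
      rw [hF]
      have : (fun r => (∑ n ∈ s₁, x n) + r) '' interior K = interior ((fun r => (∑ n ∈ s₁, x n) + r) '' K) := himg
      rw [← this]
      exact h1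
    refine interior_mono ?_ h2
    rintro _ ⟨r, hr, rfl⟩
    rw [achSet_eq_range]
    exact sum_add_mem x hpos hsum N s₁ (Finset.mem_powerset.1 hs₁) r hr
  · -- distance bound
    obtain ⟨f, rfl⟩ := hu
    obtain ⟨g, rfl⟩ := interior_subset hq
    rw [Real.dist_eq, add_sub_add_left_eq_sub]
    have b1 := phi_nonneg x hpos N f
    have b2 := phi_nonneg x hpos N g
    have b3 := phi_le_tail x hpos hsum N f
    have b4 := phi_le_tail x hpos hsum N g
    rw [abs_sub_lt_iff]
    constructor <;> linarith

theorem meagre_subspace_iff_meagre_of_achSet_contains_interval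
    (x : ℕ → ℝ) (hpos : ∀ n, 0 < x n) (hsum : Summable x)
    (hint : ∃ a b : ℝ, a < b ∧ Set.Ioo a b ⊆ achSet x) :
    ∀ A : Set ℝ, A ⊆ achSet x →
      (IsMeagre {p : achSet x | (p : ℝ) ∈ A} ↔ IsMeagre A) := by
  classical
  have hEclosed : IsClosed (achSet x) := by
    rw [achSet_eq_range x]
    exact (isCompact_range (continuous_phi x hpos hsum 0)).isClosed
  have hreg := achSet_regular x hpos hsum hint
  intro A hA
  constructor
  · intro hM
    rw [isMeagre_iff_countable_union_isNowhereDense] at hM ⊢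
    obtain ⟨S, hS, hc, hsub⟩ := hM
    refine ⟨(fun s : Set (achSet x) => ((↑) '' s : Set ℝ)) '' S, ?_, hc.image _, ?_⟩
    · rintro _ ⟨s, hs, rfl⟩
      exact nwd_image_of_nwd_subspace hEclosed hreg s (hS s hs)
    · intro a ha
      have hp : (⟨a, hA ha⟩ : achSet x) ∈ {p : achSet x | (p : ℝ) ∈ A} := ha
      obtain ⟨s, hsS, hps⟩ := hsub hp
      exact ⟨(↑) '' s, ⟨s, hsS, rfl⟩, ⟨_, hps, rfl⟩⟩
  · intro hA'
    rw [isMeagre_iff_countable_union_isNowhereDense] at hA' ⊢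
    obtain ⟨S, hS, hc, hsub⟩ := hA'
    refine ⟨(fun s : Set ℝ => {p : achSet x | (p : ℝ) ∈ closure s}) '' S, ?_, hc.image _, ?_⟩
    · rintro _ ⟨s, hs, rfl⟩
      exact nwd_preimage_of_closed_nwd hreg (closure s) isClosed_closure (hS s hs)
    · intro p hp
      obtain ⟨s, hsS, hps⟩ := hsub hp
      exact ⟨_, ⟨s, hsS, rfl⟩, subset_closure hps⟩
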